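/- Let φ: ℝ → ℝ be M₁-Lipschitz with φ(0) finite, and let Z ~ N(0,1). For v ∈ ℝ with 1/2 ≤ |v| ≤ 3/2, |E[φ(vZ)²] − E[φ(Z)²]| ≤ M₁(2|φ(0)| + M₁·5/√(2π)) · |v² − 1|. -/

import Mathlib

open MeasureTheory ProbabilityTheory Real Set Filter

lemma aux_exp_int : Integrable (fun x : ℝ => Real.exp (-x ^ 2 / 2)) := by
  have := integrable_exp_neg_mul_sq (b := (1/2 : ℝ)) (by norm_num)
  convert this using 2 with x; ring_nf

lemma aux_exp_val : ∫ x : ℝ, Real.exp (-x ^ 2 / 2) = Real.sqrt (2 * Real.pi) := by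
  have := integral_gaussian (1/2 : ℝ)
  have h2 : (π / (1/2 : ℝ)) = 2 * π := by ring
  rw [h2] at this; rw [← this]; congr 1 with x; ring_nf

lemma aux_abs_int : Integrable (fun x : ℝ => |x| * Real.exp (-x ^ 2 / 2)) := by
  have h := (integrable_mul_exp_neg_mul_sq (b := (1/2 : ℝ)) (by norm_num)).abs
  convert h using 2 with x
  rw [abs_mul, abs_of_pos (Real.exp_pos _)]; ring_nf

lemma aux_sq_int : Integrable (fun x : ℝ => x ^ 2 * Real.exp (-x ^ 2 / 2)) := by
  have h := integrable_rpow_mul_exp_neg_mul_sq (b := (1/2 : ℝ)) (by norm_num) (s := 2) (by norm_num)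
  convert h using 2 with x
  rw [show ((2:ℝ) = ((2:ℕ):ℝ)) by norm_num, Real.rpow_natCast]; ring_nf

lemma aux_tend : Filter.Tendsto (fun x : ℝ => Real.exp (-x ^ 2 / 2)) atTop (nhds 0) := by
  apply Real.tendsto_exp_atBot.comp
  apply Filter.Tendsto.atBot_div_const (by norm_num : (0:ℝ) < 2)
  exact Filter.tendsto_neg_atBot_iff.mpr (tendsto_pow_atTop (by norm_num))

lemma aux_deriv (x : ℝ) : HasDerivAt (fun y : ℝ => -Real.exp (-y ^ 2 / 2))
    (x * Real.exp (-x ^ 2 / 2)) x := by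
  have h1 : HasDerivAt (fun y : ℝ => -y ^ 2 / 2) (-x) x := by
    have := ((hasDerivAt_pow 2 x).neg).div_const 2
    refine this.congr_deriv ?_
    simp; ring
  have := (h1.exp).neg
  refine this.congr_deriv ?_
  ring

lemma aux_lin_on : IntegrableOn (fun x : ℝ => x * Real.exp (-x ^ 2 / 2)) (Ioi 0) := by
  refine (aux_abs_int.integrableOn).congr_fun (fun x hx => ?_) measurableSet_Ioi
  beta_reduce
  rw [abs_of_pos (by exact hx : (0:ℝ) < x)]

lemma aux_Ioi_lin : ∫ x in Ioi (0:ℝ), x * Real.exp (-x ^ 2 / 2) = 1 := by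
  have ht : Filter.Tendsto (fun x : ℝ => -Real.exp (-x ^ 2 / 2)) atTop (nhds 0) := by
    simpa using aux_tend.neg
  have := integral_Ioi_of_hasDerivAt_of_tendsto' (fun x _ => aux_deriv x) aux_lin_on ht
  simpa using this

lemma aux_abs_val : ∫ x : ℝ, |x| * Real.exp (-x ^ 2 / 2) = 2 := by
  have h := integral_comp_abs (f := fun x : ℝ => x * Real.exp (-x ^ 2 / 2))
  have he : ∀ x : ℝ, |x| * Real.exp (-|x| ^ 2 / 2) = |x| * Real.exp (-x ^ 2 / 2) := by
    intro x; rw [sq_abs]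
  simp only [he] at h
  rw [h, aux_Ioi_lin]; norm_num

lemma aux_exp_Ioi : ∫ x in Ioi (0:ℝ), Real.exp (-x ^ 2 / 2) = Real.sqrt (2 * Real.pi) / 2 := by
  have := integral_gaussian_Ioi (1/2 : ℝ)
  have h2 : (π / (1/2 : ℝ)) = 2 * π := by ring
  rw [h2] at this
  rw [← this]
  congr 1 with x; ring_nf

lemma aux_tend2 : Filter.Tendsto (fun x : ℝ => x * Real.exp (-x ^ 2 / 2)) atTop (nhds 0) := by
  have h0 := Real.tendsto_pow_mul_exp_neg_atTop_nhds_zero 1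
  simp only [pow_one] at h0
  apply squeeze_zero' ?_ ?_ h0
  · filter_upwards [Filter.eventually_ge_atTop (0:ℝ)] with x hx
    positivity
  · filter_upwards [Filter.eventually_ge_atTop (2:ℝ)] with x hx
    apply mul_le_mul_of_nonneg_left _ (by linarith)
    apply Real.exp_le_exp.mpr
    nlinarith

lemma aux_deriv2 (x : ℝ) : HasDerivAt (fun y : ℝ => -(y * Real.exp (-y ^ 2 / 2)))
    (x ^ 2 * Real.exp (-x ^ 2 / 2) - Real.exp (-x ^ 2 / 2)) x := by
  have h1 : HasDerivAt (fun y : ℝ => -y ^ 2 / 2) (-x) x := by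
    have := ((hasDerivAt_pow 2 x).neg).div_const 2
    refine this.congr_deriv ?_
    simp; ring
  have := ((hasDerivAt_id x).mul h1.exp).neg
  refine this.congr_deriv ?_
  simp only [id]
  ring

lemma aux_sq_Ioi : ∫ x in Ioi (0:ℝ), x ^ 2 * Real.exp (-x ^ 2 / 2)
    = Real.sqrt (2 * Real.pi) / 2 := by
  have hint : IntegrableOn
      (fun x : ℝ => x ^ 2 * Real.exp (-x ^ 2 / 2) - Real.exp (-x ^ 2 / 2)) (Ioi 0) :=
    (aux_sq_int.sub aux_exp_int).integrableOn
  have ht : Filter.Tendsto (fun x : ℝ => -(x * Real.exp (-x ^ 2 / 2))) atTop (nhds 0) := by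
    simpa using aux_tend2.neg
  have h0 := integral_Ioi_of_hasDerivAt_of_tendsto' (fun x _ => aux_deriv2 x) hint ht
  simp only [mul_zero, neg_zero, zero_mul, sub_zero, sub_self] at h0
  rw [integral_sub (aux_sq_int.integrableOn (s := Ioi 0)) (aux_exp_int.integrableOn (s := Ioi 0))]
    at h0
  have := sub_eq_zero.mp h0
  rw [this, aux_exp_Ioi]

lemma aux_sq_val : ∫ x : ℝ, x ^ 2 * Real.exp (-x ^ 2 / 2) = Real.sqrt (2 * Real.pi) := by
  have h := integral_comp_abs (f := fun x : ℝ => x ^ 2 * Real.exp (-x ^ 2 / 2))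
  have he : ∀ x : ℝ, |x| ^ 2 * Real.exp (-|x| ^ 2 / 2) = x ^ 2 * Real.exp (-x ^ 2 / 2) := by
    intro x; rw [sq_abs]
  simp only [he] at h
  rw [h, aux_sq_Ioi]; ring

lemma gauss_pdf_eq (x : ℝ) :
    gaussianPDFReal 0 1 x = (Real.sqrt (2 * Real.pi))⁻¹ * Real.exp (-x ^ 2 / 2) := by
  simp [gaussianPDFReal]

lemma gauss_int_eq (g : ℝ → ℝ) :
    ∫ z, g z ∂gaussianReal 0 1 = ∫ x, gaussianPDFReal 0 1 x * g x := by
  rw [gaussianReal_of_var_ne_zero 0 one_ne_zero]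
  have h : (gaussianPDF 0 1) = fun x => ((gaussianPDFReal 0 1 x).toNNReal : ENNReal) := by
    rfl
  rw [h, integral_withDensity_eq_integral_smul
    ((measurable_gaussianPDFReal 0 1).real_toNNReal) g]
  congr 1 with x
  simp [NNReal.smul_def, Real.coe_toNNReal _ (gaussianPDFReal_nonneg 0 1 x)]

lemma gauss_integrable_iff (g : ℝ → ℝ) :
    Integrable g (gaussianReal 0 1) ↔
      Integrable (fun x => gaussianPDFReal 0 1 x * g x) := by
  rw [gaussianReal_of_var_ne_zero 0 one_ne_zero]
  have h : (gaussianPDF 0 1) = fun x => ((gaussianPDFReal 0 1 x).toNNReal : ENNReal) := by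
    rfl
  rw [h, integrable_withDensity_iff_integrable_smul
    ((measurable_gaussianPDFReal 0 1).real_toNNReal)]
  constructor <;> intro hh <;> refine hh.congr (Filter.Eventually.of_forall fun x => ?_) <;>
    simp [NNReal.smul_def, Real.coe_toNNReal _ (gaussianPDFReal_nonneg 0 1 x)]

lemma sqrt_two_pi_pos : 0 < Real.sqrt (2 * Real.pi) :=
  Real.sqrt_pos.mpr (by positivity)

lemma gauss_abs_integrable : Integrable (fun z : ℝ => |z|) (gaussianReal 0 1) := by
  rw [gauss_integrable_iff]
  refine (aux_abs_int.const_mul ((Real.sqrt (2 * Real.pi))⁻¹)).congr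
    (Filter.Eventually.of_forall fun x => ?_)
  simp only [gauss_pdf_eq]; ring

lemma gauss_sq_integrable : Integrable (fun z : ℝ => z ^ 2) (gaussianReal 0 1) := by
  rw [gauss_integrable_iff]
  refine (aux_sq_int.const_mul ((Real.sqrt (2 * Real.pi))⁻¹)).congr
    (Filter.Eventually.of_forall fun x => ?_)
  simp only [gauss_pdf_eq]; ring

lemma gauss_abs_moment : ∫ z, |z| ∂gaussianReal 0 1 = 2 / Real.sqrt (2 * Real.pi) := by
  rw [gauss_int_eq]
  have h : (fun x : ℝ => gaussianPDFReal 0 1 x * |x|)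
      = fun x => (Real.sqrt (2 * Real.pi))⁻¹ * (|x| * Real.exp (-x ^ 2 / 2)) := by
    funext x; simp only [gauss_pdf_eq]; ring
  rw [h, integral_const_mul, aux_abs_val]
  rw [div_eq_mul_inv, mul_comm]

lemma gauss_sq_moment : ∫ z, z ^ 2 ∂gaussianReal 0 1 = 1 := by
  rw [gauss_int_eq]
  have h : (fun x : ℝ => gaussianPDFReal 0 1 x * x ^ 2)
      = fun x => (Real.sqrt (2 * Real.pi))⁻¹ * (x ^ 2 * Real.exp (-x ^ 2 / 2)) := by
    funext x; simp only [gauss_pdf_eq]; ring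
  rw [h, integral_const_mul, aux_sq_val, inv_mul_cancel₀ sqrt_two_pi_pos.ne']

set_option maxHeartbeats 1000000 in
/-- Let `φ : ℝ → ℝ` be `M₁`-Lipschitz and `Z ~ N(0,1)`.  For `v ∈ ℝ` with
`1/2 ≤ |v| ≤ 3/2`,
`|E[φ(vZ)²] − E[φ(Z)²]| ≤ M₁(2|φ(0)| + M₁·5/√(2π)) · |v² − 1|`. -/
theorem gaussian_square_moment_local_lipschitz (M₁ : ℝ) (φ : ℝ → ℝ)
    (hφ : ∀ s t : ℝ, |φ s - φ t| ≤ M₁ * |s - t|)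
    (v : ℝ) (hv1 : 1 / 2 ≤ |v|) (hv2 : |v| ≤ 3 / 2) :
    |(∫ z, φ (v * z) ^ 2 ∂gaussianReal 0 1) - ∫ z, φ z ^ 2 ∂gaussianReal 0 1|
      ≤ M₁ * (2 * |φ 0| + M₁ * 5 / Real.sqrt (2 * Real.pi)) * |v ^ 2 - 1| := by
  have hM : 0 ≤ M₁ := by
    have h := hφ 1 0
    simp at h
    exact (abs_nonneg _).trans h
  have hcont : Continuous φ := by
    have hL : LipschitzWith (Real.toNNReal M₁) φ := by
      refine LipschitzWith.of_dist_le_mul fun s t => ?_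
      rw [Real.dist_eq, Real.dist_eq, Real.coe_toNNReal _ hM]
      exact hφ s t
    exact hL.continuous
  -- integrability of z ↦ φ (c z)^2 for any c
  have hint : ∀ c : ℝ, Integrable (fun z => φ (c * z) ^ 2) (gaussianReal 0 1) := by
    intro c
    refine Integrable.mono'
      ((integrable_const (2 * φ 0 ^ 2)).add (gauss_sq_integrable.const_mul (2 * M₁ ^ 2 * c ^ 2)))
      (((hcont.comp (continuous_const.mul continuous_id)).pow 2).aestronglyMeasurable)
      (Filter.Eventually.of_forall fun z => ?_)
    have hb : |φ (c * z) - φ 0| ≤ M₁ * (|c| * |z|) := by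
      have := hφ (c * z) 0
      rwa [sub_zero, abs_mul] at this
    have h1 : |φ (c * z)| ≤ |φ 0| + M₁ * (|c| * |z|) := by
      have := abs_sub_abs_le_abs_sub (φ (c * z)) (φ 0)
      linarith
    have h1sq : |φ (c * z)| * |φ (c * z)|
        ≤ (|φ 0| + M₁ * (|c| * |z|)) * (|φ 0| + M₁ * (|c| * |z|)) :=
      mul_self_le_mul_self (abs_nonneg _) h1
    have habs2 : (M₁ * (|c| * |z|)) ^ 2 = M₁ ^ 2 * c ^ 2 * z ^ 2 := by
      rw [mul_pow, mul_pow, sq_abs, sq_abs]; ring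
    simp only [Pi.add_apply]
    rw [Real.norm_eq_abs, abs_of_nonneg (sq_nonneg _), ← sq_abs (φ (c * z))]
    nlinarith [h1sq, habs2, sq_nonneg (|φ 0| - M₁ * (|c| * |z|)), sq_abs (φ 0)]
  -- reduce to w = |v|
  have hmap : ∀ c : ℝ, ∫ z, φ (c * z) ^ 2 ∂gaussianReal 0 1
      = ∫ y, φ y ^ 2 ∂gaussianReal 0 (⟨c ^ 2, sq_nonneg c⟩ * 1) := by
    intro c
    have h := gaussianReal_map_const_mul (μ := 0) (v := 1) c
    rw [mul_zero] at h
    erw [← h, integral_map (measurable_const_mul c).aemeasurable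
      ((hcont.pow 2).aestronglyMeasurable)]
    rfl
  have hveq : ∫ z, φ (v * z) ^ 2 ∂gaussianReal 0 1
      = ∫ z, φ (|v| * z) ^ 2 ∂gaussianReal 0 1 := by
    rw [hmap v, hmap |v|]
    congr 2
    ext
    simp [sq_abs]
  set w := |v| with hwdef
  have hw0 : (0:ℝ) ≤ w := abs_nonneg v
  have hw1 : 1 / 2 ≤ w := hv1
  have hw2 : w ≤ 3 / 2 := hv2
  -- the integral with φ z (not φ (1*z))
  have hint1 : Integrable (fun z => φ z ^ 2) (gaussianReal 0 1) := by
    refine (hint 1).congr (Filter.Eventually.of_forall fun z => ?_)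
    simp
  set c₁ : ℝ := M₁ * |w - 1| * (2 * |φ 0|) with hc₁
  set c₂ : ℝ := M₁ * |w - 1| * (5 / 2) * M₁ with hc₂
  have hptw : ∀ z : ℝ, |φ (w * z) ^ 2 - φ z ^ 2| ≤ c₁ * |z| + c₂ * z ^ 2 := by
    intro z
    have h1 : |φ (w * z) - φ z| ≤ M₁ * (|w - 1| * |z|) := by
      have h := hφ (w * z) z
      have : w * z - z = (w - 1) * z := by ring
      rwa [this, abs_mul] at h
    have ha : |φ (w * z) - φ 0| ≤ M₁ * ((3 / 2) * |z|) := by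
      have h0 : |φ (w * z) - φ 0| ≤ M₁ * |w * z| := by simpa using hφ (w * z) 0
      refine h0.trans ?_
      rw [abs_mul, abs_of_nonneg hw0]
      exact mul_le_mul_of_nonneg_left
        (mul_le_mul_of_nonneg_right hw2 (abs_nonneg z)) hM
    have hb : |φ z - φ 0| ≤ M₁ * |z| := by simpa using hφ z 0
    have h2 : |φ (w * z) + φ z| ≤ 2 * |φ 0| + (5 / 2) * (M₁ * |z|) := by
      have ha' := abs_le.mp ha
      have hb' := abs_le.mp hb
      have h3 := neg_abs_le (φ 0)
      have h4 := le_abs_self (φ 0)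
      rw [abs_le]
      refine ⟨by nlinarith [ha'.1, hb'.1], by nlinarith [ha'.2, hb'.2]⟩
    have hkey : |φ (w * z) ^ 2 - φ z ^ 2|
        ≤ (M₁ * (|w - 1| * |z|)) * (2 * |φ 0| + (5 / 2) * (M₁ * |z|)) := by
      have heq : φ (w * z) ^ 2 - φ z ^ 2 = (φ (w * z) - φ z) * (φ (w * z) + φ z) := by ring
      rw [heq, abs_mul]
      exact mul_le_mul h1 h2 (abs_nonneg _) (by positivity)
    refine hkey.trans (le_of_eq ?_)
    rw [hc₁, hc₂, ← sq_abs z]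
    ring
  have hrhs_int : Integrable (fun z : ℝ => c₁ * |z| + c₂ * z ^ 2) (gaussianReal 0 1) :=
    (gauss_abs_integrable.const_mul c₁).add (gauss_sq_integrable.const_mul c₂)
  have key : |(∫ z, φ (w * z) ^ 2 ∂gaussianReal 0 1) - ∫ z, φ z ^ 2 ∂gaussianReal 0 1|
      ≤ c₁ * (2 / Real.sqrt (2 * Real.pi)) + c₂ := by
    rw [← integral_sub (hint w) hint1]
    have hnorm : |∫ z, (φ (w * z) ^ 2 - φ z ^ 2) ∂gaussianReal 0 1|
        ≤ ∫ z, |φ (w * z) ^ 2 - φ z ^ 2| ∂gaussianReal 0 1 := by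
      simpa [Real.norm_eq_abs] using
        norm_integral_le_integral_norm (μ := gaussianReal 0 1)
          (f := fun z => φ (w * z) ^ 2 - φ z ^ 2)
    refine hnorm.trans ?_
    have hmono := integral_mono ((hint w).sub hint1).abs hrhs_int hptw
    refine hmono.trans (le_of_eq ?_)
    rw [integral_add (gauss_abs_integrable.const_mul c₁) (gauss_sq_integrable.const_mul c₂),
      integral_const_mul, integral_const_mul, gauss_abs_moment, gauss_sq_moment, mul_one]
  rw [hveq]
  refine key.trans ?_
  -- final arithmetic
  have hs2 : Real.sqrt (2 * Real.pi) ^ 2 = 2 * Real.pi := Real.sq_sqrt (by positivity)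
  have hsp := sqrt_two_pi_pos
  have hs3 : Real.sqrt (2 * Real.pi) ≤ 3 := by nlinarith [Real.pi_le_four]
  have hs32 : 3 / 2 ≤ Real.sqrt (2 * Real.pi) := by nlinarith [Real.pi_gt_three]
  have habs : |v ^ 2 - 1| = |w - 1| * (w + 1) := by
    have h1 : (w - 1) * (w + 1) = v ^ 2 - 1 := by
      have h2 : (w - 1) * (w + 1) = w ^ 2 - 1 := by ring
      rw [h2, hwdef, sq_abs]
    rw [← h1, abs_mul, abs_of_nonneg (by linarith : (0:ℝ) ≤ w + 1)]
  rw [habs, hc₁, hc₂]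
  have hu1 : 2 / Real.sqrt (2 * Real.pi) ≤ w + 1 := by
    rw [div_le_iff₀ hsp]
    nlinarith [mul_le_mul (by linarith : (3:ℝ)/2 ≤ w + 1) hs32 (by linarith) (by linarith)]
  have hu2 : (5 : ℝ) / 2 ≤ (w + 1) * (5 / Real.sqrt (2 * Real.pi)) := by
    have h53 : (5:ℝ) / 3 ≤ 5 / Real.sqrt (2 * Real.pi) := by
      rw [div_le_div_iff₀ (by norm_num) hsp]
      nlinarith
    have e1 : (3/2 : ℝ) * (5 / Real.sqrt (2 * Real.pi))
        ≤ (w + 1) * (5 / Real.sqrt (2 * Real.pi)) :=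
      mul_le_mul_of_nonneg_right (by linarith) (by positivity)
    nlinarith
  have hA : 0 ≤ |φ 0| := abs_nonneg _
  have hB : 0 ≤ |w - 1| := abs_nonneg _
  have t1 : M₁ * |w - 1| * (2 * |φ 0|) * (2 / Real.sqrt (2 * Real.pi))
      ≤ M₁ * (2 * |φ 0|) * (|w - 1| * (w + 1)) := by
    have h := mul_le_mul_of_nonneg_left hu1 (by positivity : 0 ≤ M₁ * |w - 1| * (2 * |φ 0|))
    refine le_trans (le_of_eq (by ring)) (h.trans (le_of_eq (by ring)))
  have t2 : M₁ * |w - 1| * (5 / 2) * M₁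
      ≤ M₁ * (M₁ * 5 / Real.sqrt (2 * Real.pi)) * (|w - 1| * (w + 1)) := by
    have h := mul_le_mul_of_nonneg_left hu2 (by positivity : 0 ≤ M₁ * |w - 1| * M₁)
    refine le_trans (le_of_eq (by ring)) (h.trans (le_of_eq (by ring)))
  have hr : M₁ * (2 * |φ 0|) * (|w - 1| * (w + 1))
        + M₁ * (M₁ * 5 / Real.sqrt (2 * Real.pi)) * (|w - 1| * (w + 1))
      = M₁ * (2 * |φ 0| + M₁ * 5 / Real.sqrt (2 * Real.pi)) * (|w - 1| * (w + 1)) := by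
    ring
  linarith [t1, t2]
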